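/- For every 2 ≤ j ≤ n−1 and every i with j < i ≤ m, if b_j ≠ b_{j+1}, then D[i,j+1] − D[i,j] ≠ D′[i,j] − D′[i,j−1]. -/

import Mathlib

/-- The DTW dynamic programming table recurrence for sequences `a` (length `m`)
and `b` (length `n`), both indexed from 1. -/
def DTWTable (a b : ℕ → ℝ) (m n : ℕ) (D : ℕ → ℕ → ℝ) : Prop :=
  D 1 1 = (a 1 - b 1) ^ 2 ∧
  (∀ i, 1 < i → i ≤ m → D i 1 = D (i - 1) 1 + (a i - b 1) ^ 2) ∧
  (∀ j, 1 < j → j ≤ n → D 1 j = D 1 (j - 1) + (a 1 - b j) ^ 2) ∧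
  (∀ i j, 1 < i → i ≤ m → 1 < j → j ≤ n →
    D i j = min (min (D i (j - 1)) (D (i - 1) j)) (D (i - 1) (j - 1)) + (a i - b j) ^ 2)

/-- Closed form for the DTW table under the monotonicity assumptions. -/
noncomputable def Ftab (a b : ℕ → ℝ) (i j : ℕ) : ℝ :=
  (∑ r ∈ Finset.Icc 1 (min i j), (a r - b r) ^ 2)
  + (∑ r ∈ Finset.Icc (j+1) i, (a r - b j) ^ 2)
  + (∑ s ∈ Finset.Icc (i+1) j, (a i - b s) ^ 2)

lemma sum_Icc_bot (f : ℕ → ℝ) {a b : ℕ} (h : a ≤ b) :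
    ∑ r ∈ Finset.Icc a b, f r = f a + ∑ r ∈ Finset.Icc (a+1) b, f r := by
  rw [Finset.Icc_eq_cons_Ioc h, Finset.sum_cons, Finset.Icc_add_one_left_eq_Ioc]

lemma Ftab_ge (a b : ℕ → ℝ) {i j : ℕ} (h : j ≤ i) :
    Ftab a b i j = (∑ r ∈ Finset.Icc 1 j, (a r - b r) ^ 2)
      + ∑ r ∈ Finset.Icc (j+1) i, (a r - b j) ^ 2 := by
  unfold Ftab
  rw [min_eq_right h, Finset.Icc_eq_empty (show ¬(i+1 ≤ j) by omega), Finset.sum_empty, add_zero]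

lemma Ftab_le (a b : ℕ → ℝ) {i j : ℕ} (h : i ≤ j) :
    Ftab a b i j = (∑ r ∈ Finset.Icc 1 i, (a r - b r) ^ 2)
      + ∑ s ∈ Finset.Icc (i+1) j, (a i - b s) ^ 2 := by
  unfold Ftab
  rw [min_eq_left h, Finset.Icc_eq_empty (show ¬(j+1 ≤ i) by omega), Finset.sum_empty]
  ring

lemma chain_mono (f : ℕ → ℝ) (m : ℕ) (h : ∀ i, 1 ≤ i → i < m → f i ≤ f (i+1)) :
    ∀ i j, 1 ≤ i → i ≤ j → j ≤ m → f i ≤ f j := by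
  intro i j hi hij hjm
  induction j, hij using Nat.le_induction with
  | base => exact le_refl _
  | succ k hk ih => exact (ih (by omega)).trans (h k (by omega) (by omega))

lemma Ftab_rec (a b : ℕ → ℝ) (m n : ℕ)
    (ha : ∀ i, 1 ≤ i → i < m → a (i + 1) ≤ a i)
    (hb : ∀ j, 1 ≤ j → j < n → b j ≤ b (j + 1))
    (hab : ∀ i j, 1 ≤ i → i ≤ m → 1 ≤ j → j ≤ n → b j < a i) :
    ∀ i j, 1 < i → i ≤ m → 1 < j → j ≤ n →
      Ftab a b i j = min (min (Ftab a b i (j-1)) (Ftab a b (i-1) j)) (Ftab a b (i-1) (j-1))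
        + (a i - b j) ^ 2 := by
  intro i j hi him hj hjn
  obtain ⟨p, rfl⟩ : ∃ p, i = p + 1 := ⟨i - 1, by omega⟩
  obtain ⟨q, rfl⟩ : ∃ q, j = q + 1 := ⟨j - 1, by omega⟩
  have hp : 1 ≤ p := by omega
  have hq : 1 ≤ q := by omega
  simp only [Nat.add_sub_cancel]
  rcases Nat.lt_trichotomy (p+1) (q+1) with hlt | heq | hgt
  · -- i < j : above the diagonal
    have hiq : p + 1 ≤ q := by omega
    have e1 : Ftab a b (p+1) (q+1) = Ftab a b (p+1) q + (a (p+1) - b (q+1)) ^ 2 := by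
      rw [Ftab_le a b (le_of_lt hlt), Ftab_le a b hiq,
          Finset.sum_Icc_succ_top (show p+1+1 ≤ q+1 by omega)]
      ring
    have e2 : Ftab a b p (q+1) = Ftab a b p q + (a p - b (q+1)) ^ 2 := by
      rw [Ftab_le a b (show p ≤ q+1 by omega), Ftab_le a b (show p ≤ q by omega),
          Finset.sum_Icc_succ_top (show p+1 ≤ q+1 by omega)]
      ring
    have e3 : Ftab a b (p+1) q = (∑ r ∈ Finset.Icc 1 p, (a r - b r) ^ 2)
        + ∑ s ∈ Finset.Icc (p+1) q, (a (p+1) - b s) ^ 2 := by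
      rw [Ftab_le a b hiq, Finset.sum_Icc_succ_top (show 1 ≤ p+1 by omega),
          sum_Icc_bot (fun s => (a (p+1) - b s) ^ 2) hiq]
      ring
    have e4 : Ftab a b p q = (∑ r ∈ Finset.Icc 1 p, (a r - b r) ^ 2)
        + ∑ s ∈ Finset.Icc (p+1) q, (a p - b s) ^ 2 := Ftab_le a b (show p ≤ q by omega)
    have h14 : Ftab a b (p+1) q ≤ Ftab a b p q := by
      rw [e3, e4]
      refine add_le_add_right (Finset.sum_le_sum ?_) _
      intro s hs
      simp only [Finset.mem_Icc] at hs
      have hbs : b s < a (p+1) := hab (p+1) s (by omega) (by omega) (by omega) (by omega)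
      have hap : a (p+1) ≤ a p := ha p hp (by omega)
      have h1 : (0:ℝ) ≤ a (p+1) - b s := by linarith
      have h2 : a (p+1) - b s ≤ a p - b s := by linarith
      exact pow_le_pow_left₀ h1 h2 2
    have h24 : Ftab a b p q ≤ Ftab a b p (q+1) := by
      rw [e2]; nlinarith [sq_nonneg (a p - b (q+1))]
    rw [min_eq_left (h14.trans h24), min_eq_left h14, e1]
  · -- i = j : diagonal
    have hpq : p = q := by omega
    subst hpq
    have e0 : Ftab a b (p+1) (p+1) = Ftab a b p p + (a (p+1) - b (p+1)) ^ 2 := by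
      rw [Ftab_le a b (le_refl (p+1)), Ftab_le a b (le_refl p),
          Finset.sum_Icc_succ_top (show 1 ≤ p+1 by omega)]
      rw [Finset.Icc_eq_empty (show ¬ (p+1+1 ≤ p+1) by omega),
          Finset.Icc_eq_empty (show ¬ (p+1 ≤ p) by omega)]
      simp
    have e1 : Ftab a b (p+1) p = Ftab a b p p + (a (p+1) - b p) ^ 2 := by
      rw [Ftab_ge a b (show p ≤ p+1 by omega), Ftab_le a b (le_refl p),
          Finset.Icc_self, Finset.sum_singleton,
          Finset.Icc_eq_empty (show ¬ (p+1 ≤ p) by omega)]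
      simp
    have e2 : Ftab a b p (p+1) = Ftab a b p p + (a p - b (p+1)) ^ 2 := by
      rw [Ftab_le a b (show p ≤ p+1 by omega), Ftab_le a b (le_refl p),
          Finset.Icc_self, Finset.sum_singleton,
          Finset.Icc_eq_empty (show ¬ (p+1 ≤ p) by omega)]
      simp
    have h1 : Ftab a b p p ≤ Ftab a b (p+1) p := by
      rw [e1]; nlinarith [sq_nonneg (a (p+1) - b p)]
    have h2 : Ftab a b p p ≤ Ftab a b p (p+1) := by
      rw [e2]; nlinarith [sq_nonneg (a p - b (p+1))]
    rw [min_eq_right (le_min h1 h2), e0]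
  · -- i > j : below the diagonal
    have hji : q + 1 ≤ p := by omega
    have e1 : Ftab a b (p+1) (q+1) = Ftab a b p (q+1) + (a (p+1) - b (q+1)) ^ 2 := by
      rw [Ftab_ge a b (le_of_lt hgt), Ftab_ge a b hji,
          Finset.sum_Icc_succ_top (show q+1+1 ≤ p+1 by omega)]
      ring
    have e2 : Ftab a b (p+1) q = Ftab a b p q + (a (p+1) - b q) ^ 2 := by
      rw [Ftab_ge a b (show q ≤ p+1 by omega), Ftab_ge a b (show q ≤ p by omega),
          Finset.sum_Icc_succ_top (show q+1 ≤ p+1 by omega)]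
      ring
    have e3 : Ftab a b p (q+1) = (∑ r ∈ Finset.Icc 1 q, (a r - b r) ^ 2)
        + ∑ r ∈ Finset.Icc (q+1) p, (a r - b (q+1)) ^ 2 := by
      rw [Ftab_ge a b hji, Finset.sum_Icc_succ_top (show 1 ≤ q+1 by omega),
          sum_Icc_bot (fun r => (a r - b (q+1)) ^ 2) hji]
      ring
    have e4 : Ftab a b p q = (∑ r ∈ Finset.Icc 1 q, (a r - b r) ^ 2)
        + ∑ r ∈ Finset.Icc (q+1) p, (a r - b q) ^ 2 := Ftab_ge a b (show q ≤ p by omega)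
    have h34 : Ftab a b p (q+1) ≤ Ftab a b p q := by
      rw [e3, e4]
      refine add_le_add_right (Finset.sum_le_sum ?_) _
      intro r hr
      simp only [Finset.mem_Icc] at hr
      have hbr : b (q+1) < a r := hab r (q+1) (by omega) (by omega) (by omega) (by omega)
      have hbq : b q ≤ b (q+1) := hb q hq (by omega)
      have h1 : (0:ℝ) ≤ a r - b (q+1) := by linarith
      have h2 : a r - b (q+1) ≤ a r - b q := by linarith
      exact pow_le_pow_left₀ h1 h2 2
    have h32 : Ftab a b p q ≤ Ftab a b (p+1) q := by
      rw [e2]; nlinarith [sq_nonneg (a (p+1) - b q)]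
    rw [min_eq_right (h34.trans h32), min_eq_left h34, e1]

lemma closed_form (a b : ℕ → ℝ) (m n : ℕ) (D : ℕ → ℕ → ℝ) (hD : DTWTable a b m n D)
    (ha : ∀ i, 1 ≤ i → i < m → a (i + 1) ≤ a i)
    (hb : ∀ j, 1 ≤ j → j < n → b j ≤ b (j + 1))
    (hab : ∀ i j, 1 ≤ i → i ≤ m → 1 ≤ j → j ≤ n → b j < a i) :
    ∀ i j, 1 ≤ i → i ≤ m → 1 ≤ j → j ≤ n → D i j = Ftab a b i j := by
  obtain ⟨h11, hcol, hrow, hrec⟩ := hD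
  suffices H : ∀ k i j, i + j ≤ k → 1 ≤ i → i ≤ m → 1 ≤ j → j ≤ n → D i j = Ftab a b i j by
    intro i j h1 h2 h3 h4; exact H (i + j) i j le_rfl h1 h2 h3 h4
  intro k
  induction k with
  | zero => intro i j hk h1 _ h3 _; omega
  | succ k ih =>
    intro i j hk hi him hj hjn
    by_cases hi1 : i = 1
    · subst hi1
      by_cases hj1 : j = 1
      · subst hj1
        rw [h11, Ftab_le a b (le_refl 1), Finset.Icc_self, Finset.sum_singleton,
            Finset.Icc_eq_empty (show ¬ (1+1 ≤ 1) by omega), Finset.sum_empty, add_zero]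
      · obtain ⟨q, rfl⟩ : ∃ q, j = q + 1 := ⟨j - 1, by omega⟩
        have hq : 1 ≤ q := by omega
        rw [hrow (q+1) (by omega) hjn]
        simp only [Nat.add_sub_cancel]
        rw [ih 1 q (by omega) le_rfl him hq (by omega),
            Ftab_le a b (show 1 ≤ q+1 by omega), Ftab_le a b (show 1 ≤ q from hq),
            Finset.sum_Icc_succ_top (show 1+1 ≤ q+1 by omega)]
        ring
    · by_cases hj1 : j = 1
      · subst hj1
        obtain ⟨p, rfl⟩ : ∃ p, i = p + 1 := ⟨i - 1, by omega⟩
        have hp : 1 ≤ p := by omega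
        rw [hcol (p+1) (by omega) him]
        simp only [Nat.add_sub_cancel]
        rw [ih p 1 (by omega) hp (by omega) le_rfl hjn,
            Ftab_ge a b (show 1 ≤ p+1 by omega), Ftab_ge a b (show 1 ≤ p from hp),
            Finset.sum_Icc_succ_top (show 1+1 ≤ p+1 by omega)]
        ring
      · have hi2 : 1 < i := by omega
        have hj2 : 1 < j := by omega
        rw [hrec i j hi2 him hj2 hjn,
            ih i (j-1) (by omega) hi him (by omega) (by omega),
            ih (i-1) j (by omega) (by omega) (by omega) hj hjn,
            ih (i-1) (j-1) (by omega) (by omega) (by omega) (by omega) (by omega)]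
        exact (Ftab_rec a b m n ha hb hab i j hi2 him hj2 hjn).symm

theorem stmt_14 (a b : ℕ → ℝ) (m n : ℕ) (hm : 2 ≤ m) (hn : 3 ≤ n)
    (D D' : ℕ → ℕ → ℝ) (hD : DTWTable a b m n D)
    (hD' : DTWTable a (fun j => b (j + 1)) m (n - 1) D')
    (hA : ∀ i, 1 ≤ i → i < m → a (i + 1) ≤ a i)
    (hB : ∀ j, 1 ≤ j → j < n → b j ≤ b (j + 1))
    (hAB : b n < a m) :
    ∀ j i, 2 ≤ j → j ≤ n - 1 → j < i → i ≤ m → b j ≠ b (j + 1) →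
      D i (j + 1) - D i j ≠ D' i j - D' i (j - 1) := by
  intro j i hj2 hjn1 hji him hne
  have hmono_b : ∀ s t, 1 ≤ s → s ≤ t → t ≤ n → b s ≤ b t := chain_mono b n hB
  have hmono_a : ∀ s t, 1 ≤ s → s ≤ t → t ≤ m → a t ≤ a s := by
    intro s t hs hst htm
    have := chain_mono (fun i => -a i) m
      (fun i h1 h2 => by simpa using hA i h1 h2) s t hs hst htm
    simpa using this
  have hab : ∀ i j, 1 ≤ i → i ≤ m → 1 ≤ j → j ≤ n → b j < a i := by
    intro i j h1 h2 h3 h4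
    calc b j ≤ b n := hmono_b j n h3 h4 le_rfl
    _ < a m := hAB
    _ ≤ a i := hmono_a i m h1 h2 le_rfl
  have hab' : ∀ i j, 1 ≤ i → i ≤ m → 1 ≤ j → j ≤ n - 1 → (fun t => b (t+1)) j < a i :=
    fun i j h1 h2 h3 h4 => hab i (j+1) h1 h2 (by omega) (by omega)
  have hb' : ∀ j, 1 ≤ j → j < n - 1 → (fun t => b (t+1)) j ≤ (fun t => b (t+1)) (j+1) :=
    fun j h1 h2 => hB (j+1) (by omega) (by omega)
  have hC := closed_form a b m n D hD hA hB hab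
  have hC' := closed_form a (fun t => b (t+1)) m (n-1) D' hD' hA hb' hab'
  obtain ⟨q, rfl⟩ : ∃ q, j = q + 1 := ⟨j - 1, by omega⟩
  have hq : 1 ≤ q := by omega
  simp only [Nat.add_sub_cancel]
  have E1 : D i (q+1+1) = Ftab a b i (q+1+1) :=
    hC i (q+1+1) (by omega) him (by omega) (by omega)
  have E2 : D i (q+1) = Ftab a b i (q+1) := hC i (q+1) (by omega) him (by omega) (by omega)
  have E3 : D' i (q+1) = Ftab a (fun t => b (t+1)) i (q+1) :=
    hC' i (q+1) (by omega) him (by omega) (by omega)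
  have E4 : D' i q = Ftab a (fun t => b (t+1)) i q :=
    hC' i q (by omega) him hq (by omega)
  have key : D i (q+1+1) - D i (q+1) - (D' i (q+1) - D' i q)
      = (a (q+1) - b (q+1)) ^ 2 - (a (q+1) - b (q+1+1)) ^ 2 := by
    rw [E1, E2, E3, E4,
        Ftab_ge a b (show q+1+1 ≤ i by omega),
        Ftab_ge a b (show q+1 ≤ i by omega),
        Ftab_ge a (fun t => b (t+1)) (show q+1 ≤ i by omega),
        Ftab_ge a (fun t => b (t+1)) (show q ≤ i by omega)]
    rw [Finset.sum_Icc_succ_top (show 1 ≤ q+1+1 by omega) (fun r => (a r - b r) ^ 2),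
        Finset.sum_Icc_succ_top (show 1 ≤ q+1 by omega) (fun r => (a r - b (r+1)) ^ 2),
        sum_Icc_bot (fun r => (a r - b (q+1+1)) ^ 2) (show q+1+1 ≤ i by omega),
        sum_Icc_bot (fun r => (a r - b (q+1)) ^ 2) (show q+1 ≤ i by omega)]
    ring
  intro hEq
  rw [hEq] at key
  have hlt : b (q+1) < b (q+1+1) := lt_of_le_of_ne (hB (q+1) (by omega) (by omega)) hne
  have hba : b (q+1+1) < a (q+1) := hab (q+1) (q+1+1) (by omega) (by omega) (by omega) (by omega)
  nlinarith [key, hlt, hba]
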